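/- Let L and L' be free abelian groups of the same finite rank, A a commutative ring, and φ : L → L' an isogeny (an injective homomorphism with finite cokernel) whose degree deg φ := #(L'/φ(L)) is invertible in A. Then the induced A-algebra homomorphism φ_R : R → R' between the augmentation-ideal-adic completions of A[L] and A[L'] is an isomorphism. -/

import Mathlib

set_option maxHeartbeats 1000000
set_option synthInstance.maxHeartbeats 400000

open AddMonoidAlgebra

section generic

variable (A : Type*) [CommRing A] (B : Type*) [CommRing B] [Algebra A B] (J : Ideal B)

/-- Transition maps of the inverse system `(B/J^k)_k`. -/
noncomputable def idealTrans (k : ℕ) : B ⧸ J ^ (k + 1) →+* B ⧸ J ^ k :=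
  Ideal.Quotient.factor (Ideal.pow_le_pow_right (Nat.le_succ k))

/-- The `J`-adic completion `lim_k B/J^k`, realized as a subalgebra of the product
`∏ k, B/J^k` (the compatible families). -/
noncomputable def adicLim : Subalgebra A (∀ k : ℕ, B ⧸ J ^ k) where
  carrier := {f | ∀ k, idealTrans B J k (f (k + 1)) = f k}
  mul_mem' := fun ha hb k => by
    rw [Pi.mul_apply, Pi.mul_apply, map_mul, ha k, hb k]
  add_mem' := fun ha hb k => by
    rw [Pi.add_apply, Pi.add_apply, map_add, ha k, hb k]
  algebraMap_mem' := fun a k => by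
    rw [Pi.algebraMap_apply, Pi.algebraMap_apply,
      IsScalarTower.algebraMap_apply A B (B ⧸ J ^ (k + 1)),
      Ideal.Quotient.algebraMap_eq, idealTrans, Ideal.Quotient.factor_mk,
      IsScalarTower.algebraMap_apply A B (B ⧸ J ^ k), Ideal.Quotient.algebraMap_eq]

/-- The canonical map `B → lim_k B/J^k`. -/
noncomputable def adicLimOf : B →ₐ[A] adicLim A B J :=
  AlgHom.codRestrict (AlgHom.pi (R := A) (A := fun k => B ⧸ J ^ k)
      (fun k => Ideal.Quotient.mkₐ A (J ^ k)))
    (adicLim A B J) (fun x k => by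
      simp only [AlgHom.pi_apply, Ideal.Quotient.mkₐ_eq_mk, idealTrans,
        Ideal.Quotient.factor_mk])

end generic

section grpring

variable (A : Type*) [CommRing A] (L : Type*) [AddCommGroup L]

/-- The augmentation map of the group ring `A[L]`, sending each group element `δ_ℓ` to `1`. -/
noncomputable def aug : AddMonoidAlgebra A L →ₐ[A] A :=
  AddMonoidAlgebra.lift (R := A) (M := L) (A := A) 1

/-- The augmentation ideal `J ⊆ A[L]`. -/
noncomputable def augIdeal : Ideal (AddMonoidAlgebra A L) :=
  RingHom.ker (aug A L)

/-- `R`, the `J`-adic completion of the group ring `A[L]`. -/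
noncomputable abbrev RR := adicLim A (AddMonoidAlgebra A L) (augIdeal A L)

end grpring



section roots

variable {B : Type*} [CommRing B]

lemma pow_succ_binom (u w : B) (m : ℕ) :
    ∃ t, (u + w) ^ (m + 1) = u ^ (m + 1) + (m + 1 : ℕ) * u ^ m * w + w ^ 2 * t := by
  induction m with
  | zero => exact ⟨0, by push_cast; ring⟩
  | succ m ih =>
    obtain ⟨t, ht⟩ := ih
    refine ⟨(m + 1 : ℕ) * u ^ m + u * t + w * t, ?_⟩
    rw [pow_succ, ht]
    push_cast
    ring

lemma nroot_unique (n : ℕ) (hn0 : n ≠ 0) (hn : IsUnit (n : B)) {u v : B}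
    (hu : IsUnit u) (hw : IsNilpotent (v - u)) (h : v ^ n = u ^ n) : v = u := by
  obtain ⟨m, rfl⟩ := Nat.exists_eq_succ_of_ne_zero hn0
  simp only [Nat.succ_eq_add_one] at h hn
  obtain ⟨t, ht⟩ := pow_succ_binom u (v - u) m
  rw [add_sub_cancel] at ht
  have h0 : (v - u) * ((m + 1 : ℕ) * u ^ m + (v - u) * t) = 0 := by
    linear_combination h - ht
  have hc : IsUnit ((m + 1 : ℕ) * u ^ m + (v - u) * t) := by
    refine IsNilpotent.isUnit_add_left_of_commute ?_ (hn.mul (hu.pow m)) (Commute.all _ _)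
    exact Commute.isNilpotent_mul_right (Commute.all _ _) hw
  exact sub_eq_zero.mp ((hc.mul_left_eq_zero).mp h0)

lemma nroot_exists_aux (n : ℕ) (hn0 : n ≠ 0) (hn : IsUnit (n : B)) {z : B}
    (hz : IsNilpotent z) (m : ℕ) :
    ∃ v : B, z ∣ (v - 1) ∧ z ^ (m + 1) ∣ (v ^ n - (1 + z)) := by
  induction m with
  | zero => exact ⟨1, ⟨0, by ring⟩, ⟨-1, by rw [one_pow]; ring⟩⟩
  | succ m ih =>
    obtain ⟨v, ⟨d, hd⟩, ⟨c, hc⟩⟩ := ih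
    have hvu : IsUnit v := by
      have h1 : IsNilpotent (z * d) := Commute.isNilpotent_mul_right (Commute.all _ _) hz
      have h2 : v = 1 + z * d := by linear_combination hd
      rw [h2]; exact h1.isUnit_one_add
    obtain ⟨p, rfl⟩ := Nat.exists_eq_succ_of_ne_zero hn0
    simp only [Nat.succ_eq_add_one] at hc hn ⊢
    have hD : IsUnit ((p + 1 : ℕ) * v ^ p) := hn.mul (hvu.pow p)
    obtain ⟨D, hDeq⟩ := hD
    set y : B := ((D⁻¹ : Bˣ) : B) with hy
    have hinv : ((p + 1 : ℕ) * v ^ p) * y = 1 := by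
      rw [← hDeq, hy]; exact_mod_cast D.mul_inv
    set w : B := -(z ^ (m + 1) * c * y) with hw
    obtain ⟨t, ht⟩ := pow_succ_binom v w p
    refine ⟨v + w, ?_, ?_⟩
    · have h1 : z ∣ w := ⟨-(z ^ m * c * y), by rw [hw]; ring⟩
      have h2 : v + w - 1 = (v - 1) + w := by ring
      rw [h2]
      exact dvd_add ⟨d, hd⟩ h1
    · refine ⟨z ^ m * (c ^ 2 * y ^ 2 * t), ?_⟩
      rw [ht, hw]
      linear_combination hc - (z ^ (m + 1) * c) * hinv

lemma nroot_exists (n : ℕ) (hn0 : n ≠ 0) (hn : IsUnit (n : B)) {z : B}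
    (hz : IsNilpotent z) : ∃ v : B, v ^ n = 1 + z ∧ z ∣ (v - 1) := by
  obtain ⟨M, hM⟩ := hz
  obtain ⟨v, h1, h2⟩ := nroot_exists_aux n hn0 hn ⟨M, hM⟩ M
  refine ⟨v, ?_, h1⟩
  obtain ⟨c, hc⟩ := h2
  have : z ^ (M + 1) = 0 := by rw [pow_succ, hM, zero_mul]
  rw [this, zero_mul] at hc
  linear_combination hc

end roots

section maps

variable (A : Type*) [CommRing A] (L : Type*) [AddCommGroup L]
  (L' : Type*) [AddCommGroup L'] (L'' : Type*) [AddCommGroup L'']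

lemma mapDom_single (φ : L →+ L') (a : L) (b : A) :
    AddMonoidAlgebra.mapDomainAlgHom A A φ (AddMonoidAlgebra.single a b) =
      AddMonoidAlgebra.single (φ a) b := by
  simp only [AddMonoidAlgebra.mapDomainAlgHom, AlgHom.coe_mk,
    AddMonoidAlgebra.mapDomainRingHom_apply, ZeroHom.toFun_eq_coe, AddMonoidHom.toZeroHom_coe,
    Finsupp.mapDomain.addMonoidHom_apply, Finsupp.mapDomain_single, AddMonoidAlgebra.mapDomain_single]

lemma aug_single (a : L) (b : A) : aug A L (AddMonoidAlgebra.single a b) = b := by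
  simp [aug, AddMonoidAlgebra.lift_single]

lemma aug_mapDom (φ : L →+ L') (x : AddMonoidAlgebra A L) :
    aug A L' (AddMonoidAlgebra.mapDomainAlgHom A A φ x) = aug A L x := by
  have h : (aug A L').comp (AddMonoidAlgebra.mapDomainAlgHom A A φ) = aug A L := by
    apply AddMonoidAlgebra.algHom_ext
    intro a
    rw [AlgHom.comp_apply, mapDom_single, aug_single, aug_single]
    exact Subsingleton.elim _ _
  exact DFunLike.congr_fun h x

lemma mapDom_mem_augIdeal (φ : L →+ L') {x : AddMonoidAlgebra A L} (hx : x ∈ augIdeal A L) :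
    AddMonoidAlgebra.mapDomainAlgHom A A φ x ∈ augIdeal A L' := by
  have h := aug_mapDom A L L' φ x
  simp only [augIdeal, RingHom.mem_ker] at hx ⊢
  rw [h]; exact hx

lemma mapDom_pow_mem (φ : L →+ L') (k : ℕ) {x : AddMonoidAlgebra A L}
    (hx : x ∈ (augIdeal A L) ^ k) :
    AddMonoidAlgebra.mapDomainAlgHom A A φ x ∈ (augIdeal A L') ^ k := by
  have h1 : ((augIdeal A L) ^ k).map (AddMonoidAlgebra.mapDomainAlgHom A A φ)
      ≤ (augIdeal A L') ^ k := by
    rw [Ideal.map_pow]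
    refine Ideal.pow_right_mono ?_ k
    rw [Ideal.map_le_iff_le_comap]
    intro y hy
    exact mapDom_mem_augIdeal A L L' φ hy
  exact h1 (Ideal.mem_map_of_mem _ hx)

/-- The level-`k` map `A[L]/J^k → A[L']/J'^k` induced by `φ`. -/
noncomputable def levelMap (φ : L →+ L') (k : ℕ) :
    (AddMonoidAlgebra A L ⧸ (augIdeal A L) ^ k) →ₐ[A]
      (AddMonoidAlgebra A L' ⧸ (augIdeal A L') ^ k) :=
  Ideal.Quotient.liftₐ _
    ((Ideal.Quotient.mkₐ A ((augIdeal A L') ^ k)).comp (AddMonoidAlgebra.mapDomainAlgHom A A φ))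
    (fun a ha => by
      simp only [AlgHom.comp_apply, Ideal.Quotient.mkₐ_eq_mk, Ideal.Quotient.eq_zero_iff_mem]
      exact mapDom_pow_mem A L L' φ k ha)

lemma levelMap_mk (φ : L →+ L') (k : ℕ) (x : AddMonoidAlgebra A L) :
    levelMap A L L' φ k (Ideal.Quotient.mk _ x) =
      Ideal.Quotient.mk _ (AddMonoidAlgebra.mapDomainAlgHom A A φ x) := by
  simp [levelMap, Ideal.Quotient.liftₐ_apply]
  rfl

lemma levelMap_trans (φ : L →+ L') (k : ℕ) (x : AddMonoidAlgebra A L ⧸ (augIdeal A L) ^ (k + 1)) :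
    idealTrans _ (augIdeal A L') k (levelMap A L L' φ (k + 1) x) =
      levelMap A L L' φ k (idealTrans _ (augIdeal A L) k x) := by
  obtain ⟨y, rfl⟩ := Ideal.Quotient.mk_surjective x
  simp only [idealTrans]
  rw [levelMap_mk, Ideal.Quotient.factor_mk, Ideal.Quotient.factor_mk, levelMap_mk]

lemma levelMap_comp (φ : L →+ L') (ψ : L' →+ L'') (k : ℕ)
    (x : AddMonoidAlgebra A L ⧸ (augIdeal A L) ^ k) :
    levelMap A L' L'' ψ k (levelMap A L L' φ k x) = levelMap A L L'' (ψ.comp φ) k x := by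
  obtain ⟨y, rfl⟩ := Ideal.Quotient.mk_surjective x
  rw [levelMap_mk, levelMap_mk, levelMap_mk]
  congr 1
  simp only [AddMonoidAlgebra.mapDomainAlgHom, AlgHom.coe_mk,
    AddMonoidAlgebra.mapDomainRingHom_apply, ZeroHom.toFun_eq_coe, AddMonoidHom.toZeroHom_coe,
    Finsupp.mapDomain.addMonoidHom_apply, AddMonoidHom.coe_comp]
  ext; simp [Finsupp.mapDomain_comp]

end maps

section nsmul

variable (A : Type*) [CommRing A] (L : Type*) [AddCommGroup L]

lemma levelMap_nsmul_bijective (n : ℕ) (hn0 : n ≠ 0) (hn : IsUnit (n : A)) (k : ℕ) :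
    Function.Bijective (levelMap A L L (n • AddMonoidHom.id L) k) := by
  set J := augIdeal A L with hJ
  set Bk := (AddMonoidAlgebra A L ⧸ J ^ k) with hBk
  set mk : AddMonoidAlgebra A L →+* Bk := Ideal.Quotient.mk (J ^ k) with hmk
  set Jbar : Ideal Bk := J.map mk with hJb
  have hJbar_pow : Jbar ^ k = ⊥ := by rw [hJb, ← Ideal.map_pow, hmk, Ideal.map_quotient_self]
  have hnil : ∀ x ∈ Jbar, IsNilpotent x := fun x hx =>
    ⟨k, by have := Ideal.pow_mem_pow hx k; rwa [hJbar_pow, Ideal.mem_bot] at this⟩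
  have hnB : IsUnit ((n : ℕ) : Bk) := by
    have := hn.map (algebraMap A Bk)
    rwa [map_natCast] at this
  have hmem : ∀ x : Bk, x ∈ Jbar ↔ ∃ j ∈ J, mk j = x := fun x =>
    Ideal.mem_map_iff_of_surjective mk Ideal.Quotient.mk_surjective
  have hone : ∀ a : L, mk (AddMonoidAlgebra.single a 1) - 1 ∈ Jbar := by
    intro a
    refine (hmem _).mpr ⟨AddMonoidAlgebra.single a 1 - 1, ?_, by rw [map_sub, map_one]⟩
    simp only [hJ, augIdeal, RingHom.mem_ker, map_sub, map_one, aug_single, sub_self]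
  have hex : ∀ a : L, ∃ v : Bk, v ^ n = mk (AddMonoidAlgebra.single a 1) ∧ v - 1 ∈ Jbar := by
    intro a
    obtain ⟨v, hv1, hv2⟩ := nroot_exists n hn0 hnB (hnil _ (hone a))
    refine ⟨v, by rw [hv1]; ring, ?_⟩
    obtain ⟨c, hc⟩ := hv2
    rw [hc]
    exact Ideal.mul_mem_right c _ (hone a)
  choose r hr1 hr2 using hex
  have huniq : ∀ (g v w : Bk), v ^ n = g → w ^ n = g → v - 1 ∈ Jbar → w - 1 ∈ Jbar → v = w := by
    intro g v w hv hw hv1 hw1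
    refine nroot_unique n hn0 hnB ?_ ?_ (by rw [hv, hw])
    · have h1 : IsUnit (1 + (w - 1)) := (hnil _ hw1).isUnit_one_add
      rwa [add_sub_cancel] at h1
    · have h1 : v - w = (v - 1) - (w - 1) := by ring
      rw [h1]; exact hnil _ (Submodule.sub_mem _ hv1 hw1)
  have hmul : ∀ a b : L, r (a + b) = r a * r b := by
    intro a b
    refine huniq (mk (AddMonoidAlgebra.single (a + b) 1)) _ _ (hr1 _) ?_ (hr2 _) ?_
    · rw [mul_pow, hr1, hr1, ← map_mul, AddMonoidAlgebra.single_mul_single, mul_one]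
    · have h1 : r a * r b - 1 = (r a - 1) * r b + (r b - 1) := by ring
      rw [h1]
      exact Submodule.add_mem _ (Ideal.mul_mem_right _ _ (hr2 a)) (hr2 b)
  have hzero : r 0 = 1 := by
    refine huniq (1 : Bk) _ _ ?_ (one_pow n) (hr2 0) (by simp)
    rw [hr1, ← AddMonoidAlgebra.one_def, map_one]
  set F : Multiplicative L →* Bk :=
    { toFun := fun a => r (Multiplicative.toAdd a)
      map_one' := hzero
      map_mul' := fun a b => hmul _ _ } with hF
  set h : AddMonoidAlgebra A L →ₐ[A] Bk := AddMonoidAlgebra.lift A Bk L F with hh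
  have h_single : ∀ (a : L) (b : A), h (AddMonoidAlgebra.single a b) = b • r a := by
    intro a b
    rw [hh, AddMonoidAlgebra.lift_single]
    rfl
  have hdiff : ∀ x : AddMonoidAlgebra A L, h x - mk x ∈ Jbar := by
    intro x
    induction x using AddMonoidAlgebra.induction_linear with
    | zero => simp only [map_zero, sub_zero]; exact Submodule.zero_mem _
    | add f g hf hg =>
      have h1 : h (f + g) - mk (f + g) = (h f - mk f) + (h g - mk g) := by
        rw [map_add, map_add]; ring
      rw [h1]; exact Submodule.add_mem _ hf hg
    | single a b =>
      have e1 : h (AddMonoidAlgebra.single a b) = b • r a := h_single a b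
      have e2 : (AddMonoidAlgebra.single a b : AddMonoidAlgebra A L)
          = b • AddMonoidAlgebra.single a 1 := by
        rw [AddMonoidAlgebra.smul_single', mul_one]
      have e3 : mk (AddMonoidAlgebra.single a b) = b • mk (AddMonoidAlgebra.single a 1) := by
        rw [e2, ← Ideal.Quotient.mkₐ_eq_mk A, map_smul]
      rw [e1, e3, ← smul_sub]
      have e4 : r a - mk (AddMonoidAlgebra.single a 1)
          = (r a - 1) - (mk (AddMonoidAlgebra.single a 1) - 1) := by ring
      rw [e4]
      exact Submodule.smul_of_tower_mem _ b (Submodule.sub_mem _ (hr2 a) (hone a))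
  have h_ann : ∀ x ∈ J ^ k, h x = 0 := by
    intro x hx
    have h1 : J.map h ≤ Jbar := by
      rw [Ideal.map_le_iff_le_comap]
      intro y hy
      have h2 : h y = (h y - mk y) + mk y := by ring
      simp only [Ideal.mem_comap]
      rw [h2]
      exact Submodule.add_mem _ (hdiff y) ((hmem _).mpr ⟨y, hy, rfl⟩)
    have h2 : h x ∈ (⊥ : Ideal Bk) := by
      rw [← hJbar_pow]
      exact (Ideal.pow_right_mono h1 k) (by rw [← Ideal.map_pow]; exact Ideal.mem_map_of_mem _ hx)
    rwa [Ideal.mem_bot] at h2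
  set hbar : Bk →ₐ[A] Bk := Ideal.Quotient.liftₐ _ h h_ann with hhbar
  have hbar_mk : ∀ x, hbar (mk x) = h x := fun x => by
    rw [hhbar, hmk]; rfl
  have key1 : ∀ a : L, r (n • a) = mk (AddMonoidAlgebra.single a 1) := by
    intro a
    refine huniq (mk (AddMonoidAlgebra.single (n • a) 1)) _ _ (hr1 _) ?_ (hr2 _) (hone a)
    rw [← map_pow, AddMonoidAlgebra.single_pow, one_pow]
  have hLJ : ∀ x ∈ Jbar, levelMap A L L (n • AddMonoidHom.id L) k x ∈ Jbar := by
    intro x hx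
    obtain ⟨j, hj, rfl⟩ := (hmem x).mp hx
    rw [hmk, levelMap_mk]
    exact (hmem _).mpr ⟨_, mapDom_mem_augIdeal A L L _ hj, rfl⟩
  have hcomp : h.comp (AddMonoidAlgebra.mapDomainAlgHom A A (n • AddMonoidHom.id L))
      = Ideal.Quotient.mkₐ A (J ^ k) := by
    apply AddMonoidAlgebra.algHom_ext
    intro a
    rw [AlgHom.comp_apply, mapDom_single, h_single, one_smul, Ideal.Quotient.mkₐ_eq_mk]
    have h1 : (n • AddMonoidHom.id L) a = n • a := by
      rw [AddMonoidHom.smul_apply, AddMonoidHom.id_apply]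
    rw [h1, key1]
    exact Subsingleton.elim _ _
  have hLeft : ∀ x, hbar (levelMap A L L (n • AddMonoidHom.id L) k x) = x := by
    intro x
    obtain ⟨y, rfl⟩ := Ideal.Quotient.mk_surjective (I := J ^ k) x
    rw [levelMap_mk, hbar_mk]
    have := DFunLike.congr_fun hcomp y
    rwa [AlgHom.comp_apply, Ideal.Quotient.mkₐ_eq_mk] at this
  have hRight : ∀ x, levelMap A L L (n • AddMonoidHom.id L) k (hbar x) = x := by
    intro x
    obtain ⟨y, rfl⟩ := Ideal.Quotient.mk_surjective (I := J ^ k) x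
    rw [hbar_mk]
    have hcomp2 : (levelMap A L L (n • AddMonoidHom.id L) k).comp h
        = Ideal.Quotient.mkₐ A (J ^ k) := by
      apply AddMonoidAlgebra.algHom_ext
      intro a
      rw [AlgHom.comp_apply, h_single, one_smul, Ideal.Quotient.mkₐ_eq_mk]
      refine huniq (mk (AddMonoidAlgebra.single (n • a) 1)) _ _ ?_ ?_ ?_ (hone a)
      · rw [← map_pow, hr1, hmk, levelMap_mk, mapDom_single]
        congr 2
      · rw [← map_pow, AddMonoidAlgebra.single_pow, one_pow]
      · have e1 : levelMap A L L (n • AddMonoidHom.id L) k (r a) - 1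
            = levelMap A L L (n • AddMonoidHom.id L) k (r a - 1) := by
          rw [map_sub, map_one]
        rw [e1]
        exact hLJ _ (hr2 a)
      exact Subsingleton.elim _ _
    have := DFunLike.congr_fun hcomp2 y
    rwa [AlgHom.comp_apply, Ideal.Quotient.mkₐ_eq_mk] at this
  exact ⟨Function.LeftInverse.injective hLeft, Function.RightInverse.surjective hRight⟩

end nsmul

lemma mem_adicLim_iff (A : Type*) [CommRing A] (B : Type*) [CommRing B] [Algebra A B]
    (J : Ideal B) (f : ∀ k : ℕ, B ⧸ J ^ k) :
    f ∈ adicLim A B J ↔ ∀ k, idealTrans B J k (f (k + 1)) = f k := Iff.rfl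

theorem statement10 (A : Type*) [CommRing A]
    (L L' : Type*) [AddCommGroup L] [AddCommGroup L']
    [Module.Free ℤ L] [Module.Finite ℤ L] [Module.Free ℤ L'] [Module.Finite ℤ L']
    (hrk : Module.finrank ℤ L = Module.finrank ℤ L')
    (φ : L →+ L') (hinj : Function.Injective φ)
    (hfin : Finite (L' ⧸ φ.range))
    (hdeg : IsUnit ((Nat.card (L' ⧸ φ.range) : A))) :
    ∃ Φ : RR A L →ₐ[A] RR A L',
      (∀ x : AddMonoidAlgebra A L,
          Φ (adicLimOf A (AddMonoidAlgebra A L) (augIdeal A L) x) =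
            adicLimOf A (AddMonoidAlgebra A L') (augIdeal A L')
              (AddMonoidAlgebra.mapDomainAlgHom A A φ x)) ∧
      (∀ (r : ℕ) (x : RR A L), x.1 r = 0 → (Φ x).1 r = 0) ∧
      Function.Bijective Φ := by
  classical
  haveI := hfin
  set n := Nat.card (L' ⧸ φ.range) with hn
  have hn0 : n ≠ 0 := Nat.card_pos.ne'
  -- construct the quasi-inverse isogeny ψ with ψ ∘ φ = [n] and φ ∘ ψ = [n]
  have hmemr : ∀ x : L', n • x ∈ φ.range := by
    intro x
    haveI : Fintype (L' ⧸ φ.range) := Fintype.ofFinite _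
    have h1 : (n : ℕ) • (QuotientAddGroup.mk x : L' ⧸ φ.range) = 0 := by
      rw [hn, Nat.card_eq_fintype_card]
      exact card_nsmul_eq_zero
    have h2 : ((n • x : L') : L' ⧸ φ.range) = 0 := by
      rw [← QuotientAddGroup.mk'_apply, map_nsmul, QuotientAddGroup.mk'_apply]
      exact h1
    exact (QuotientAddGroup.eq_zero_iff _).mp h2
  choose pre hpre using fun x => AddMonoidHom.mem_range.mp (hmemr x)
  have hadd : ∀ a b : L', pre (a + b) = pre a + pre b := by
    intro a b; apply hinj; rw [hpre, map_add, hpre, hpre, smul_add]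
  set ψ : L' →+ L := AddMonoidHom.mk' pre hadd with hψ
  have hcψφ : ψ.comp φ = n • AddMonoidHom.id L := by
    ext x
    apply hinj
    rw [AddMonoidHom.comp_apply, AddMonoidHom.smul_apply, AddMonoidHom.id_apply, map_nsmul]
    exact hpre (φ x)
  have hcφψ : φ.comp ψ = n • AddMonoidHom.id L' := by
    ext x
    rw [AddMonoidHom.comp_apply, AddMonoidHom.smul_apply, AddMonoidHom.id_apply]
    exact hpre x
  have hbijL : ∀ k, Function.Bijective (levelMap A L L (n • AddMonoidHom.id L) k) :=
    levelMap_nsmul_bijective A L n hn0 hdeg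
  have hbijL' : ∀ k, Function.Bijective (levelMap A L' L' (n • AddMonoidHom.id L') k) :=
    levelMap_nsmul_bijective A L' n hn0 hdeg
  have hGF : ∀ k x, levelMap A L' L ψ k (levelMap A L L' φ k x)
      = levelMap A L L (n • AddMonoidHom.id L) k x := by
    intro k x; rw [levelMap_comp, hcψφ]
  have hFG : ∀ k x, levelMap A L L' φ k (levelMap A L' L ψ k x)
      = levelMap A L' L' (n • AddMonoidHom.id L') k x := by
    intro k x; rw [levelMap_comp, hcφψ]
  have hbijF : ∀ k, Function.Bijective (levelMap A L L' φ k) := by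
    intro k
    constructor
    · intro a b hab
      apply (hbijL k).1
      rw [← hGF k a, ← hGF k b, hab]
    · intro y
      obtain ⟨z, hz⟩ := (hbijL' k).2 y
      exact ⟨levelMap A L' L ψ k z, by rw [hFG]; exact hz⟩
  -- assemble the map on inverse limits
  set Φ : RR A L →ₐ[A] RR A L' :=
    AlgHom.codRestrict
      ((Pi.algHom A _ (fun k => (levelMap A L L' φ k).comp
          (Pi.evalAlgHom A (fun k => AddMonoidAlgebra A L ⧸ (augIdeal A L) ^ k) k))).comp
        (adicLim A (AddMonoidAlgebra A L) (augIdeal A L)).val)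
      (adicLim A (AddMonoidAlgebra A L') (augIdeal A L'))
      (fun x => by
        rw [mem_adicLim_iff]
        intro k
        show idealTrans _ (augIdeal A L') k (levelMap A L L' φ (k + 1) (x.1 (k + 1)))
          = levelMap A L L' φ k (x.1 k)
        rw [levelMap_trans]
        congr 1
        exact ((mem_adicLim_iff A _ _ x.1).mp x.2) k) with hΦ
  have hΦap : ∀ (x : RR A L) (k : ℕ), (Φ x).1 k = levelMap A L L' φ k (x.1 k) :=
    fun x k => rfl
  refine ⟨Φ, ?_, ?_, ?_, ?_⟩
  · intro x
    apply Subtype.ext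
    funext k
    rw [hΦap]
    show levelMap A L L' φ k (Ideal.Quotient.mk _ x)
      = Ideal.Quotient.mk _ (AddMonoidAlgebra.mapDomainAlgHom A A φ x)
    rw [levelMap_mk]
  · intro r x hx
    rw [hΦap, hx, map_zero]
  · intro x y hxy
    apply Subtype.ext
    funext k
    refine (hbijF k).1 ?_
    exact congrArg (fun z : RR A L' => z.1 k) hxy
  · intro y
    choose xf hxf using fun k => (hbijF k).2 (y.1 k)
    have hmem : xf ∈ adicLim A (AddMonoidAlgebra A L) (augIdeal A L) := by
      rw [mem_adicLim_iff]
      intro k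
      refine (hbijF k).1 ?_
      rw [hxf, ← levelMap_trans, hxf]
      exact ((mem_adicLim_iff A _ _ y.1).mp y.2) k
    refine ⟨⟨xf, hmem⟩, ?_⟩
    apply Subtype.ext
    funext k
    rw [hΦap]
    exact hxf k
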